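/- arXiv:2401.08401 — 4 statements merged into one kernel-verified Lean document; each statement's English description precedes it below -/
import Mathlib

section
/- For distinct primes p and q, the subgroup of the multiplicative group of positive reals generated by p and q is dense in \u211d_{>0}. -/
open Real

theorem dense_pq_powers (p q : ℕ) (hp : p.Prime) (hq : q.Prime) (hpq : p ≠ q)
    (x : ℝ) (hx : 0 < x) :
    x ∈ closure {y : ℝ | ∃ m n : ℤ, y = (p : ℝ) ^ m * (q : ℝ) ^ n} := by
  have hp1 : (1 : ℝ) < p := by exact_mod_cast hp.one_lt
  have hq1 : (1 : ℝ) < q := by exact_mod_cast hq.one_lt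
  have hp0 : (0 : ℝ) < p := by linarith
  have hq0 : (0 : ℝ) < q := by linarith
  have hlp : 0 < Real.log p := Real.log_pos hp1
  have hlq : 0 < Real.log q := Real.log_pos hq1
  set S : AddSubgroup ℝ := AddSubgroup.zmultiples (Real.log p) ⊔ AddSubgroup.zmultiples (Real.log q) with hS
  have hdense : Dense (S : Set ℝ) := by
    rcases S.dense_or_cyclic with h | ⟨c, hc⟩
    · exact h
    · exfalso
      have haS : Real.log p ∈ S := le_sup_left (α := AddSubgroup ℝ) (AddSubgroup.mem_zmultiples _)
      have hbS : Real.log q ∈ S := le_sup_right (α := AddSubgroup ℝ) (AddSubgroup.mem_zmultiples _)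
      rw [hc, ← AddSubgroup.zmultiples_eq_closure] at haS hbS
      obtain ⟨m, hm⟩ := AddSubgroup.mem_zmultiples_iff.1 haS
      obtain ⟨n, hn⟩ := AddSubgroup.mem_zmultiples_iff.1 hbS
      -- n • (m • c) = m • (n • c) : n * log p = m * log q
      have key : (n : ℝ) * Real.log p = (m : ℝ) * Real.log q := by
        rw [← hm, ← hn]
        simp [zsmul_eq_mul]; ring
      -- show p^n.natAbs = q^m.natAbs with both positive
      have hm0 : m ≠ 0 := by rintro rfl; simp at hm; linarith
      have hn0 : n ≠ 0 := by rintro rfl; simp at hn; linarith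
      have key2 : (n : ℝ) * Real.log p = Real.log ((q : ℝ) ^ m) := by
        rw [key, Real.log_zpow]
      have key3 : Real.log ((p : ℝ) ^ n) = Real.log ((q : ℝ) ^ m) := by
        rw [Real.log_zpow]; exact key2
      have hpq' : (p : ℝ) ^ n = (q : ℝ) ^ m :=
        Real.log_injOn_pos (Set.mem_Ioi.2 (zpow_pos hp0 n)) (Set.mem_Ioi.2 (zpow_pos hq0 m)) key3
      -- signs of m, n agree with sign of c; reduce to natAbs
      have : (p : ℝ) ^ (n.natAbs) = (q : ℝ) ^ (m.natAbs) := by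
        rcases lt_or_gt_of_ne hn0 with hneg | hpos
        · have hmneg : m < 0 := by
            by_contra h
            push_neg at h
            have h1 : (0:ℝ) ≤ (m : ℝ) := by exact_mod_cast h
            have h2 : ((n:ℝ)) < 0 := by exact_mod_cast hneg
            nlinarith
          have := congrArg (fun t : ℝ => t⁻¹) hpq'
          simp only [← zpow_neg] at this
          rw [← Int.natAbs_neg n, ← Int.natAbs_neg m,
            ← zpow_natCast (p:ℝ), ← zpow_natCast (q:ℝ),
            Int.natAbs_of_nonneg (by omega), Int.natAbs_of_nonneg (by omega)]
          exact this
        · have hmpos : 0 < m := by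
            by_contra h
            push_neg at h
            have h1 : (m : ℝ) ≤ 0 := by exact_mod_cast h
            have h2 : (0:ℝ) < (n:ℝ) := by exact_mod_cast hpos
            nlinarith
          rw [← zpow_natCast (p:ℝ), ← zpow_natCast (q:ℝ),
            Int.natAbs_of_nonneg (by omega), Int.natAbs_of_nonneg (by omega)]
          exact hpq'
      have hnat : p ^ n.natAbs = q ^ m.natAbs := by exact_mod_cast this
      have hdvd : p ∣ q ^ m.natAbs := hnat ▸ dvd_pow_self p (Int.natAbs_ne_zero.2 hn0)
      exact hpq ((Nat.prime_dvd_prime_iff_eq hp hq).1 (hp.dvd_of_dvd_pow hdvd))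
  -- transfer via exp
  have hxlog : Real.log x ∈ closure (S : Set ℝ) := hdense _
  have hmap : Real.exp '' (S : Set ℝ) ⊆ {y : ℝ | ∃ m n : ℤ, y = (p : ℝ) ^ m * (q : ℝ) ^ n} := by
    rintro _ ⟨g, hg, rfl⟩
    rcases (AddSubgroup.mem_sup).1 hg with ⟨y, hy, z, hz, rfl⟩
    obtain ⟨m, hm⟩ := AddSubgroup.mem_zmultiples_iff.1 hy
    obtain ⟨n, hn⟩ := AddSubgroup.mem_zmultiples_iff.1 hz
    refine ⟨m, n, ?_⟩
    rw [← hm, ← hn, zsmul_eq_mul, zsmul_eq_mul, Real.exp_add,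
      ← Real.log_zpow, ← Real.log_zpow, Real.exp_log (zpow_pos hp0 m),
      Real.exp_log (zpow_pos hq0 n)]
  have : x ∈ closure (Real.exp '' (S : Set ℝ)) := by
    have := image_closure_subset_closure_image (f := Real.exp) Real.continuous_exp
      (Set.mem_image_of_mem Real.exp hxlog)
    rwa [Real.exp_log hx] at this
  exact closure_mono hmap this
end

section
/- For distinct primes p and q, the orbits of the action of {p^m q^n : m, n \u2208 \u2124} on \u211d_{>0} by multiplication are all dense in \u211d_{>0}. -/
open Real

lemma log_prime_pos {p : ℕ} (hp : p.Prime) : 0 < Real.log p :=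
  Real.log_pos (by exact_mod_cast hp.one_lt)

lemma pq_not_cyclic {p q : ℕ} (hp : p.Prime) (hq : q.Prime) (hpq : p ≠ q)
    (a : ℝ) (hP : ∃ k : ℤ, k • a = Real.log p) (hQ : ∃ l : ℤ, l • a = Real.log q) : False := by
  obtain ⟨k, hk⟩ := hP
  obtain ⟨l, hl⟩ := hQ
  have hlp := log_prime_pos hp
  have hlq := log_prime_pos hq
  have hk0 : k ≠ 0 := by rintro rfl; simp at hk; linarith
  have hl0 : l ≠ 0 := by rintro rfl; simp at hl; linarith
  -- l * log p = k * log q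
  have key : (l : ℝ) * Real.log p = (k : ℝ) * Real.log q := by
    rw [← hk, ← hl]; push_cast [zsmul_eq_mul]; ring
  have hsign : (0 : ℝ) < (l : ℝ) * (k : ℝ) := by
    rcases lt_or_gt_of_ne (show (k:ℝ) ≠ 0 by exact_mod_cast hk0) with hkneg | hkpos
    · have : (l : ℝ) < 0 := by nlinarith
      nlinarith
    · have : (0 : ℝ) < (l : ℝ) := by nlinarith
      nlinarith
  -- WLOG both positive
  have main : ∀ k l : ℤ, 0 < k → 0 < l →
      (l : ℝ) * Real.log p = (k : ℝ) * Real.log q → False := by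
    intro k l hkpos hlpos hkey
    have hp0 : (0:ℝ) < p := by exact_mod_cast hp.pos
    have hq0 : (0:ℝ) < q := by exact_mod_cast hq.pos
    have hplq : ((p : ℝ) ^ l.toNat) = ((q : ℝ) ^ k.toNat) := by
      have h1 : Real.log ((p : ℝ) ^ l.toNat) = Real.log ((q : ℝ) ^ k.toNat) := by
        rw [Real.log_pow, Real.log_pow,
          show ((l.toNat : ℕ) : ℝ) = (l : ℝ) by exact_mod_cast Int.toNat_of_nonneg hlpos.le,
          show ((k.toNat : ℕ) : ℝ) = (k : ℝ) by exact_mod_cast Int.toNat_of_nonneg hkpos.le]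
        exact hkey
      have hp1 : (0:ℝ) < (p : ℝ) ^ l.toNat := pow_pos hp0 _
      have hq1 : (0:ℝ) < (q : ℝ) ^ k.toNat := pow_pos hq0 _
      exact Real.log_injOn_pos (Set.mem_Ioi.mpr hp1) (Set.mem_Ioi.mpr hq1) h1
    have hnat : p ^ l.toNat = q ^ k.toNat := by exact_mod_cast hplq
    have hqd : q ∣ p ^ l.toNat := by
      rw [hnat]
      exact dvd_pow_self q (by omega)
    have := (Nat.Prime.dvd_of_dvd_pow hq hqd)
    exact hpq ((Nat.prime_dvd_prime_iff_eq hq hp).mp this).symm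
  rcases lt_or_gt_of_ne hk0 with hk' | hk'
  · have hl' : l < 0 := by
      by_contra h
      push_neg at h
      have : (l:ℝ) * (k:ℝ) ≤ 0 := mul_nonpos_of_nonneg_of_nonpos (by exact_mod_cast h) (by exact_mod_cast hk'.le)
      linarith
    exact main (-k) (-l) (by omega) (by omega) (by push_cast; linarith)
  · have hl' : 0 < l := by
      by_contra h
      push_neg at h
      have : (l:ℝ) * (k:ℝ) ≤ 0 := mul_nonpos_of_nonpos_of_nonneg (by exact_mod_cast h) (by exact_mod_cast hk'.le)
      linarith
    exact main k l hk' hl' key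

theorem dense_orbits_pq (p q : ℕ) (hp : p.Prime) (hq : q.Prime) (hpq : p ≠ q)
    (x : ℝ) (hx : 0 < x) (y : ℝ) (hy : 0 < y) :
    y ∈ closure {z : ℝ | ∃ m n : ℤ, z = (p : ℝ) ^ m * (q : ℝ) ^ n * x} := by
  have hp0 : (0:ℝ) < p := by exact_mod_cast hp.pos
  have hq0 : (0:ℝ) < q := by exact_mod_cast hq.pos
  set A : AddSubgroup ℝ := AddSubgroup.closure {Real.log p, Real.log q} with hA
  have hdense : Dense (A : Set ℝ) := by
    rcases A.dense_or_cyclic with h | ⟨a, ha⟩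
    · exact h
    · exfalso
      have hmemp : Real.log p ∈ A := AddSubgroup.subset_closure (by simp)
      have hmemq : Real.log q ∈ A := AddSubgroup.subset_closure (by simp)
      rw [ha, AddSubgroup.mem_closure_singleton] at hmemp hmemq
      exact pq_not_cyclic hp hq hpq a hmemp hmemq
  have hmemy : Real.log y - Real.log x ∈ closure (A : Set ℝ) := hdense _
  have hcont : Continuous (fun z : ℝ => Real.exp (z + Real.log x)) := by continuity
  have hmaps : Set.MapsTo (fun z : ℝ => Real.exp (z + Real.log x)) (A : Set ℝ)
      {z : ℝ | ∃ m n : ℤ, z = (p : ℝ) ^ m * (q : ℝ) ^ n * x} := by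
    intro z hz
    rw [SetLike.mem_coe, hA, AddSubgroup.mem_closure_pair] at hz
    obtain ⟨m, n, hmn⟩ := hz
    refine ⟨m, n, ?_⟩
    simp only
    rw [← hmn, Real.exp_add, Real.exp_add, Real.exp_log hx, zsmul_eq_mul, zsmul_eq_mul]
    congr 2
    · rw [← Real.log_zpow, Real.exp_log (zpow_pos hp0 m)]
    · rw [← Real.log_zpow, Real.exp_log (zpow_pos hq0 n)]
  have := map_mem_closure hcont hmemy hmaps
  simpa [Real.exp_sub, Real.exp_log hx, Real.exp_log hy, sub_add_cancel] using this
end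

section
/- Let p be a prime and let a \u2208 \u1e90 = \u220f_q \u2124_q be the finite adele with a_p = 0 and a_q \u2208 \u2124_q^\u00d7 for all primes q \u2260 p. Then H_a = {r \u2208 \u211a : a r \u2208 \u1e90} equals \u2124[1/p], the subring of rationals with denominator a power of p. -/
instance (p : Nat.Primes) : Fact (p : ℕ).Prime := ⟨p.2⟩

def Ha (a : ∀ p : Nat.Primes, ℚ_[p]) : Set ℚ :=
  {r : ℚ | ∀ p : Nat.Primes, ‖(r : ℚ_[p]) * a p‖ ≤ 1}

theorem Ha_eq_Z_inv_p (p : Nat.Primes) (a : ∀ q : Nat.Primes, ℚ_[q])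
    (hap : a p = 0) (haq : ∀ q : Nat.Primes, q ≠ p → ‖a q‖ = 1) :
    Ha a = {r : ℚ | ∃ (m : ℤ) (n : ℕ), r = (m : ℚ) / (p : ℕ) ^ n} := by
  ext r
  simp only [Ha, Set.mem_setOf_eq]
  constructor
  · intro h
    have hden : ∀ d : ℕ, d.Prime → d ∣ r.den → d = p := by
      intro d hd hdvd
      by_contra hne
      haveI : Fact d.Prime := ⟨hd⟩
      set q : Nat.Primes := ⟨d, hd⟩
      haveI : Fact ((q : ℕ)).Prime := ⟨hd⟩
      have hq : ‖(r : ℚ_[q])‖ ≤ 1 := by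
        have := h q
        rwa [norm_mul, haq q (fun he => hne (congrArg Subtype.val he)), mul_one] at this
      have hu := PadicInt.isUnit_den (p := q) r hq
      have hdd : ((d : ℤ) : ℤ_[q]) ∣ ((r.den : ℤ) : ℤ_[q]) :=
        map_dvd (Int.castRingHom ℤ_[q]) (Int.natCast_dvd_natCast.mpr hdvd)
      have hdu : IsUnit (((d : ℤ) : ℤ_[q])) := isUnit_of_dvd_unit hdd (by exact_mod_cast hu)
      have h1 : ‖(((d : ℤ)) : ℤ_[q])‖ = 1 := PadicInt.isUnit_iff.mp hdu
      have hlt : ‖((d : ℤ) : ℤ_[q])‖ < 1 :=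
        (PadicInt.norm_int_lt_one_iff_dvd _).mpr (by exact_mod_cast dvd_refl (d : ℤ))
      linarith
    have hpow := Nat.eq_prime_pow_of_unique_prime_dvd (p := p) r.pos.ne'
      (fun {d} hd hdvd => hden d hd hdvd)
    refine ⟨r.num, r.den.primeFactorsList.length, ?_⟩
    conv_lhs => rw [← Rat.num_div_den r, hpow]
    push_cast
    ring
  · rintro ⟨m, n, rfl⟩ q
    by_cases hq : q = p
    · subst hq; simp [hap]
    · rw [norm_mul, haq q hq, mul_one]
      have hp1 : ‖((p : ℕ) : ℚ_[q])‖ = 1 := by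
        refine le_antisymm (by exact_mod_cast Padic.norm_int_le_one (p := q) (p : ℤ)) ?_
        by_contra hlt
        push_neg at hlt
        have : ((q : ℕ) : ℤ) ∣ ((p : ℕ) : ℤ) :=
          (Padic.norm_intCast_lt_one_iff (p := q)).mp (by exact_mod_cast hlt)
        have : (q : ℕ) = (p : ℕ) :=
          ((Nat.prime_dvd_prime_iff_eq q.2 p.2).mp (by exact_mod_cast this))
        exact hq (Nat.Primes.coe_nat_injective this)
      push_cast
      rw [div_eq_mul_inv, norm_mul, norm_inv, norm_pow, hp1, one_pow, inv_one, mul_one]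
      exact Padic.norm_int_le_one (p := q) m
end

section
/- For distinct primes p and q, the additive groups \u2124[1/p] and \u2124[1/q] are not isomorphic as abstract groups. -/
lemma mem_closure_inv_clear (q : ℕ) (hq0 : (q : ℚ) ≠ 0) {x : ℚ}
    (hx : x ∈ Subring.closure ({(q : ℚ)⁻¹} : Set ℚ)) :
    ∃ (n : ℕ) (a : ℤ), (q : ℚ) ^ n * x = (a : ℚ) := by
  induction hx using Subring.closure_induction with
  | mem y hy =>
      rcases Set.mem_singleton_iff.mp hy with rfl
      exact ⟨1, 1, by field_simp; simp⟩
  | zero => exact ⟨0, 0, by simp⟩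
  | one => exact ⟨0, 1, by simp⟩
  | add x y _ _ hx hy =>
      obtain ⟨n, a, ha⟩ := hx
      obtain ⟨m, b, hb⟩ := hy
      refine ⟨n + m, a * q ^ m + b * q ^ n, ?_⟩
      have : (q : ℚ) ^ (n + m) * (x + y)
          = (q : ℚ) ^ m * ((q : ℚ) ^ n * x) + (q : ℚ) ^ n * ((q : ℚ) ^ m * y) := by
        ring
      rw [this, ha, hb]; push_cast; ring
  | neg x _ hx =>
      obtain ⟨n, a, ha⟩ := hx
      exact ⟨n, -a, by push_cast; rw [mul_neg, ha]⟩
  | mul x y _ _ hx hy =>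
      obtain ⟨n, a, ha⟩ := hx
      obtain ⟨m, b, hb⟩ := hy
      refine ⟨n + m, a * b, ?_⟩
      have : (q : ℚ) ^ (n + m) * (x * y)
          = ((q : ℚ) ^ n * x) * ((q : ℚ) ^ m * y) := by ring
      rw [this, ha, hb]; push_cast; ring

theorem Z_inv_p_not_addEquiv_Z_inv_q (p q : ℕ) (hp : p.Prime) (hq : q.Prime) (hpq : p ≠ q) :
    ¬ Nonempty ((Subring.closure ({(p : ℚ)⁻¹} : Set ℚ)) ≃+
      (Subring.closure ({(q : ℚ)⁻¹} : Set ℚ))) := by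
  rintro ⟨e⟩
  have hp0 : (p : ℚ) ≠ 0 := by exact_mod_cast hp.ne_zero
  have hq0 : (q : ℚ) ≠ 0 := by exact_mod_cast hq.ne_zero
  set A := Subring.closure ({(p : ℚ)⁻¹} : Set ℚ)
  -- the element (1/p) * (e.symm 1) lies in A
  have ha : ((p : ℚ)⁻¹ * ((e.symm 1 : A) : ℚ)) ∈ A :=
    mul_mem (Subring.subset_closure rfl) (e.symm 1).2
  set a' : A := ⟨_, ha⟩ with ha'
  have key : p • a' = e.symm 1 := by
    ext
    push_cast [ha']
    field_simp
    rw [nsmul_eq_mul]; field_simp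
  have h1 : p • e a' = 1 := by
    rw [← map_nsmul, key, e.apply_symm_apply]
  have hval : (p : ℚ) * ((e a' : _) : ℚ) = 1 := by
    have := congrArg (Subtype.val) h1
    push_cast at this
    simpa [nsmul_eq_mul] using this
  have hinv : ((e a' : _) : ℚ) = (p : ℚ)⁻¹ := by
    field_simp at hval ⊢
    linarith
  have hmem : (p : ℚ)⁻¹ ∈ Subring.closure ({(q : ℚ)⁻¹} : Set ℚ) := hinv ▸ (e a').2
  obtain ⟨n, a, han⟩ := mem_closure_inv_clear q hq0 hmem
  have : ((q : ℤ) ^ n : ℚ) = ((a * p : ℤ) : ℚ) := by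
    push_cast
    field_simp at han
    linarith [han]
  have hz : (q : ℤ) ^ n = a * p := by exact_mod_cast this
  have hdvd : (p : ℤ) ∣ (q : ℤ) ^ n := ⟨a, by linarith [hz]⟩
  have : p ∣ q ^ n := by exact_mod_cast hdvd
  exact hpq ((Nat.prime_dvd_prime_iff_eq hp hq).mp (hp.dvd_of_dvd_pow this))
end
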